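/- Let θ > 0, ρ > 0, r = ρθ/(1+θ)², and H_n(θ) = ∫_{1/(1+θ)}^∞ zⁿ (z − 1/(1+θ))^r exp(−ρz/(1+θ)) dz. Then H_n satisfies ρ H_{n+1} − [(n+1)(1+θ)+ρ] H_n + n H_{n−1} = 0 for all n ≥ 0 (with the term n H_{n−1} vanishing at n=0). -/

import Mathlib

open MeasureTheory Set Filter Real

lemma aux_integrable (k : ℕ) {a c s : ℝ} (ha : 0 < a) (hc : 0 < c) (hs : 0 < s) :
    IntegrableOn (fun z : ℝ => z ^ k * (z - a) ^ s * Real.exp (-c * z)) (Set.Ioi a) := by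
  have hmaj : IntegrableOn (fun z : ℝ => z ^ ((k : ℝ) + s) * Real.exp (-c * z)) (Set.Ioi a) := by
    have h := integrableOn_rpow_mul_exp_neg_mul_rpow (s := (k : ℝ) + s) (p := 1)
      (by have : (0:ℝ) ≤ (k:ℝ) := Nat.cast_nonneg k; linarith) one_pos hc
    simp_rw [Real.rpow_one] at h
    exact h.mono_set (Set.Ioi_subset_Ioi ha.le)
  apply hmaj.mono'
  · apply ContinuousOn.aestronglyMeasurable ?_ measurableSet_Ioi
    intro z hz
    have hz0 : z - a ≠ 0 := ne_of_gt (sub_pos.2 hz)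
    have c1 : ContinuousAt (fun z : ℝ => (z - a) ^ s) z :=
      (continuousAt_id.sub continuousAt_const).rpow_const (Or.inl hz0)
    have c2 : ContinuousAt (fun z : ℝ => Real.exp (-c * z)) z :=
      (Real.continuous_exp.comp (continuous_const.mul continuous_id)).continuousAt
    exact (((continuous_pow k).continuousAt.mul c1).mul c2).continuousWithinAt
  · filter_upwards [ae_restrict_mem measurableSet_Ioi] with z hz
    have hz0 : 0 < z := ha.trans hz
    have hza : 0 ≤ z - a := (sub_pos.2 hz).le
    rw [Real.norm_eq_abs, abs_of_nonneg (mul_nonneg (mul_nonneg (pow_nonneg hz0.le _) (Real.rpow_nonneg hza _))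
      (Real.exp_pos _).le)]
    have hsplit : z ^ ((k : ℝ) + s) = z ^ k * z ^ s := by
      rw [Real.rpow_add hz0, Real.rpow_natCast]
    rw [hsplit]
    have h1 : (z - a) ^ s ≤ z ^ s :=
      Real.rpow_le_rpow hza (by linarith) hs.le
    have h2 : (0:ℝ) ≤ z ^ k := pow_nonneg hz0.le _
    nlinarith [Real.exp_pos (-c * z), mul_le_mul_of_nonneg_left h1 h2,
      mul_le_mul_of_nonneg_right (mul_le_mul_of_nonneg_left h1 h2) (Real.exp_pos (-c * z)).le]

lemma aux_tendsto (k : ℕ) {a c s : ℝ} (ha : 0 < a) (hc : 0 < c) (hs : 0 < s) :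
    Tendsto (fun z : ℝ => z ^ k * (z - a) ^ s * Real.exp (-c * z)) atTop (nhds 0) := by
  apply squeeze_zero' ?_ ?_ (tendsto_rpow_mul_exp_neg_mul_atTop_nhds_zero ((k : ℝ) + s) c hc)
  · filter_upwards [eventually_gt_atTop a] with z hz
    exact mul_nonneg (mul_nonneg (pow_nonneg (ha.trans hz).le _)
      (Real.rpow_nonneg (sub_pos.2 hz).le _)) (Real.exp_pos _).le
  · filter_upwards [eventually_gt_atTop a] with z hz
    have hz0 : 0 < z := ha.trans hz
    have hza : 0 ≤ z - a := (sub_pos.2 hz).le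
    rw [Real.rpow_add hz0, Real.rpow_natCast]
    have h1 : (z - a) ^ s ≤ z ^ s := Real.rpow_le_rpow hza (by linarith) hs.le
    have h2 : (0:ℝ) ≤ z ^ k := pow_nonneg hz0.le _
    nlinarith [mul_le_mul_of_nonneg_right (mul_le_mul_of_nonneg_left h1 h2)
      (Real.exp_pos (-c * z)).le]

theorem H_recurrence (ρ θ : ℝ) (hρ : 0 < ρ) (hθ : 0 < θ)
    (H : ℕ → ℝ)
    (hH : ∀ n : ℕ, H n = ∫ z in Set.Ioi (1 / (1 + θ)),
      z ^ n * (z - 1 / (1 + θ)) ^ (ρ * θ / (1 + θ) ^ 2) * Real.exp (-ρ * z / (1 + θ))) :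
    ∀ n : ℕ,
      ρ * H (n + 1) - (((n : ℝ) + 1) * (1 + θ) + ρ) * H n + (n : ℝ) * H (n - 1) = 0 := by
  have h1θ : (0:ℝ) < 1 + θ := by linarith
  obtain ⟨a, ha_def⟩ : ∃ x : ℝ, x = 1 / (1 + θ) := ⟨_, rfl⟩
  obtain ⟨c, hc_def⟩ : ∃ x : ℝ, x = ρ / (1 + θ) := ⟨_, rfl⟩
  obtain ⟨r, hr_def⟩ : ∃ x : ℝ, x = ρ * θ / (1 + θ) ^ 2 := ⟨_, rfl⟩
  rw [show (1:ℝ) / (1 + θ) = a from ha_def.symm] at hH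
  rw [show ρ * θ / (1 + θ) ^ 2 = r from hr_def.symm] at hH
  have ha : 0 < a := by rw [ha_def]; positivity
  have hc : 0 < c := by rw [hc_def]; positivity
  have hr : 0 < r := by rw [hr_def]; positivity
  have hr1 : 0 < r + 1 := by linarith
  -- rewrite H in terms of exp (-c*z)
  have hHI : ∀ k : ℕ, H k = ∫ z in Set.Ioi a, z ^ k * (z - a) ^ r * Real.exp (-c * z) := by
    intro k
    rw [hH k]
    congr 1
    funext z
    congr 1
    rw [hc_def]
    ring_nf
  intro n
  -- FTC on G z = z^n * (z-a)^(r+1) * exp(-c z)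
  have key : (∫ z in Set.Ioi a,
      ((n : ℝ) * (z ^ (n - 1) * (z - a) ^ (r + 1) * Real.exp (-c * z))
        + (r + 1) * (z ^ n * (z - a) ^ r * Real.exp (-c * z))
        - c * (z ^ n * (z - a) ^ (r + 1) * Real.exp (-c * z)))) = 0 := by
    have hcont : ContinuousWithinAt
        (fun z : ℝ => z ^ n * (z - a) ^ (r + 1) * Real.exp (-c * z)) (Set.Ici a) a := by
      apply ContinuousAt.continuousWithinAt
      have c1 : ContinuousAt (fun z : ℝ => (z - a) ^ (r + 1)) a :=
        (continuousAt_id.sub continuousAt_const).rpow_const (Or.inr hr1.le)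
      have c2 : ContinuousAt (fun z : ℝ => Real.exp (-c * z)) a :=
        (Real.continuous_exp.comp (continuous_const.mul continuous_id)).continuousAt
      exact ((continuous_pow n).continuousAt.mul c1).mul c2
    have hderiv : ∀ z ∈ Set.Ioi a, HasDerivAt
        (fun z : ℝ => z ^ n * (z - a) ^ (r + 1) * Real.exp (-c * z))
        ((n : ℝ) * (z ^ (n - 1) * (z - a) ^ (r + 1) * Real.exp (-c * z))
          + (r + 1) * (z ^ n * (z - a) ^ r * Real.exp (-c * z))
          - c * (z ^ n * (z - a) ^ (r + 1) * Real.exp (-c * z))) z := by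
      intro z hz
      have hz0 : z - a ≠ 0 := ne_of_gt (sub_pos.2 hz)
      have d1 : HasDerivAt (fun z : ℝ => z ^ n) ((n : ℝ) * z ^ (n - 1)) z := hasDerivAt_pow n z
      have d2 : HasDerivAt (fun z : ℝ => (z - a) ^ (r + 1)) ((r + 1) * (z - a) ^ r) z := by
        have h := (Real.hasDerivAt_rpow_const (x := z - a) (p := r + 1) (Or.inl hz0)).comp z
          ((hasDerivAt_id z).sub_const a)
        simpa [Function.comp_def] using h
      have d3 : HasDerivAt (fun z : ℝ => Real.exp (-c * z)) (-c * Real.exp (-c * z)) z := by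
        have h := ((hasDerivAt_id z).const_mul (-c)).exp
        refine h.congr_deriv ?_
        show Real.exp (-c * z) * (-c * 1) = _; ring
      have := (d1.mul d2).mul d3
      refine this.congr_deriv ?_; simp only [Pi.mul_apply]
      ring
    have hint : IntegrableOn (fun z : ℝ =>
        (n : ℝ) * (z ^ (n - 1) * (z - a) ^ (r + 1) * Real.exp (-c * z))
          + (r + 1) * (z ^ n * (z - a) ^ r * Real.exp (-c * z))
          - c * (z ^ n * (z - a) ^ (r + 1) * Real.exp (-c * z))) (Set.Ioi a) :=
      (((aux_integrable (n - 1) ha hc hr1).const_mul _).add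
        ((aux_integrable n ha hc hr).const_mul _)).sub
        ((aux_integrable n ha hc hr1).const_mul _)
    have htend := aux_tendsto n ha hc hr1
    rw [integral_Ioi_of_hasDerivAt_of_tendsto hcont hderiv hint htend]
    simp [Real.zero_rpow hr1.ne']
  -- split the integral
  have hsplit : ∀ k : ℕ, (∫ z in Set.Ioi a, z ^ k * (z - a) ^ (r + 1) * Real.exp (-c * z))
      = (∫ z in Set.Ioi a, z ^ (k + 1) * (z - a) ^ r * Real.exp (-c * z))
        - a * ∫ z in Set.Ioi a, z ^ k * (z - a) ^ r * Real.exp (-c * z) := by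
    intro k
    rw [← integral_const_mul, ← integral_sub (aux_integrable (k + 1) ha hc hr)
      ((aux_integrable k ha hc hr).const_mul a)]
    apply setIntegral_congr_fun measurableSet_Ioi
    intro z hz
    have hz0 : z - a ≠ 0 := ne_of_gt (sub_pos.2 hz)
    simp only
    rw [Real.rpow_add_one hz0, pow_succ]
    ring
  have hA : Integrable (fun z : ℝ => (n : ℝ) * (z ^ (n - 1) * (z - a) ^ (r + 1) * Real.exp (-c * z)))
      (volume.restrict (Set.Ioi a)) := (aux_integrable (n - 1) ha hc hr1).const_mul _
  have hB : Integrable (fun z : ℝ => (r + 1) * (z ^ n * (z - a) ^ r * Real.exp (-c * z)))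
      (volume.restrict (Set.Ioi a)) := (aux_integrable n ha hc hr).const_mul _
  have hC : Integrable (fun z : ℝ => c * (z ^ n * (z - a) ^ (r + 1) * Real.exp (-c * z)))
      (volume.restrict (Set.Ioi a)) := (aux_integrable n ha hc hr1).const_mul _
  have hAB : Integrable (fun z : ℝ => (n : ℝ) * (z ^ (n - 1) * (z - a) ^ (r + 1) * Real.exp (-c * z))
      + (r + 1) * (z ^ n * (z - a) ^ r * Real.exp (-c * z)))
      (volume.restrict (Set.Ioi a)) := hA.add hB
  have hkey2 : (n : ℝ) * (∫ z in Set.Ioi a, z ^ (n - 1) * (z - a) ^ (r + 1) * Real.exp (-c * z))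
      + (r + 1) * (∫ z in Set.Ioi a, z ^ n * (z - a) ^ r * Real.exp (-c * z))
      - c * (∫ z in Set.Ioi a, z ^ n * (z - a) ^ (r + 1) * Real.exp (-c * z)) = 0 := by
    rw [integral_sub hAB hC, integral_add hA hB, integral_const_mul, integral_const_mul,
      integral_const_mul] at key
    exact key
  rw [hsplit, hsplit] at hkey2
  have hn1 : (n : ℝ) * (∫ z in Set.Ioi a, z ^ (n - 1 + 1) * (z - a) ^ r * Real.exp (-c * z))
      = (n : ℝ) * (∫ z in Set.Ioi a, z ^ n * (z - a) ^ r * Real.exp (-c * z)) := by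
    cases n with
    | zero => simp
    | succ m => rfl
  rw [mul_sub, hn1, ← mul_sub] at hkey2
  rw [hHI, hHI, hHI]
  set W := ∫ z in Set.Ioi a, z ^ (n + 1) * (z - a) ^ r * Real.exp (-c * z)
  set Z := ∫ z in Set.Ioi a, z ^ n * (z - a) ^ r * Real.exp (-c * z)
  set Y := ∫ z in Set.Ioi a, z ^ (n - 1) * (z - a) ^ r * Real.exp (-c * z)
  have e1 : (1 + θ) * c = ρ := by rw [hc_def]; field_simp
  have e2 : (1 + θ) * a = 1 := by rw [ha_def]; field_simp
  have e3 : (1 + θ) * (r + c * a) = ρ := by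
    rw [hr_def, hc_def, ha_def]
    field_simp
    ring
  linear_combination (-(1 + θ)) * hkey2 - W * e1 - (n : ℝ) * Y * e2 + Z * e3
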